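/- Let X = {1/n : n ∈ ℕ, n ≥ 1} ⊆ ℝ and θ ∈ (0,1). Then the Assouad spectrum of X at θ equals min{(1/2)/(1-θ), 1}. -/

import Mathlib

open Set Metric

noncomputable section

/-- `coversWith X r n` : `X` can be covered by `n` sets each of diameter at most `r`. -/
def coversWith {α : Type*} [PseudoMetricSpace α] (X : Set α) (r : ℝ) (n : ℕ) : Prop :=
  ∃ B : Fin n → Set α, (∀ i, EMetric.diam (B i) ≤ ENNReal.ofReal r) ∧ X ⊆ ⋃ i, B i

/-- The covering number `N_r(X)`: the minimal number of sets of diameter at most `r`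
needed to cover `X`. -/
noncomputable def coverNum {α : Type*} [PseudoMetricSpace α] (X : Set α) (r : ℝ) : ℕ :=
  sInf {n : ℕ | coversWith X r n}

/-- Upper box dimension: infimum of `s ≥ 0` such that `N_r(X) ≤ C r^{-s}` for all `r ∈ (0,1)`. -/
noncomputable def upperBoxDim {α : Type*} [PseudoMetricSpace α] (X : Set α) : ℝ :=
  sInf {s : ℝ | 0 ≤ s ∧ ∃ C > (0:ℝ), ∀ r ∈ Ioo (0:ℝ) 1,
    (coverNum X r : ℝ) ≤ C * r ^ (-s)}

/-- Assouad dimension (localisation at arbitrary centres `x`). -/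
noncomputable def assouadDim {α : Type*} [PseudoMetricSpace α] (X : Set α) : ℝ :=
  sInf {s : ℝ | 0 ≤ s ∧ ∃ C > (0:ℝ), ∀ R > (0:ℝ), ∀ r ∈ Ioo (0:ℝ) R, ∀ x : α,
    (coverNum (X ∩ closedBall x R) r : ℝ) ≤ C * (R / r) ^ s}

/-- Assouad dimension (localisation at centres `x ∈ X`). -/
noncomputable def assouadDimOn {α : Type*} [PseudoMetricSpace α] (X : Set α) : ℝ :=
  sInf {s : ℝ | 0 ≤ s ∧ ∃ C > (0:ℝ), ∀ R > (0:ℝ), ∀ r ∈ Ioo (0:ℝ) R, ∀ x ∈ X,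
    (coverNum (X ∩ closedBall x R) r : ℝ) ≤ C * (R / r) ^ s}

/-- Upper θ-intermediate dimension, for `θ ∈ (0,1]`: infimum of `s ≥ 0` such that for all
`ε > 0` and all sufficiently small `δ ∈ (0,1)` there is a cover of `X` with all diameters in
`[δ^(1/θ), δ]` and `s`-cost less than `ε`. -/
noncomputable def interDim {α : Type*} [PseudoMetricSpace α] (θ : ℝ) (X : Set α) : ℝ :=
  sInf {s : ℝ | 0 ≤ s ∧ ∀ ε > (0:ℝ), ∃ δ₀ ∈ Ioo (0:ℝ) 1, ∀ δ ∈ Ioo (0:ℝ) δ₀,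
    ∃ n, ∃ B : Fin n → Set α, X ⊆ (⋃ i, B i) ∧
      (∀ i, Metric.diam (B i) ∈ Icc (δ ^ (1/θ)) δ) ∧
      ∑ i, Metric.diam (B i) ^ s < ε}

/-- Assouad spectrum at `θ` (localisation at arbitrary centres `x`). -/
noncomputable def assouadSpec {α : Type*} [PseudoMetricSpace α] (θ : ℝ) (X : Set α) : ℝ :=
  sInf {s : ℝ | 0 ≤ s ∧ ∃ C > (0:ℝ), ∀ r ∈ Ioo (0:ℝ) 1, ∀ x : α,
    (coverNum (X ∩ closedBall x (r ^ θ)) r : ℝ) ≤ C * (r ^ θ / r) ^ s}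

/-- Assouad spectrum at `θ` (localisation at centres `x ∈ X`). -/
noncomputable def assouadSpecOn {α : Type*} [PseudoMetricSpace α] (θ : ℝ) (X : Set α) : ℝ :=
  sInf {s : ℝ | 0 ≤ s ∧ ∃ C > (0:ℝ), ∀ r ∈ Ioo (0:ℝ) 1, ∀ x ∈ X,
    (coverNum (X ∩ closedBall x (r ^ θ)) r : ℝ) ≤ C * (r ^ θ / r) ^ s}

/-- The set `X = {1/n : n ∈ ℕ, n ≥ 1} ⊆ ℝ`. -/
def recipSet : Set ℝ := {x : ℝ | ∃ n : ℕ, 1 ≤ n ∧ x = 1 / (n : ℝ)}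

end
section Helpers

open Real Filter

lemma coversWith_mono {X Y : Set ℝ} {r : ℝ} {n : ℕ} (h : X ⊆ Y) (hc : coversWith Y r n) :
    coversWith X r n := by
  obtain ⟨B, hB, hcov⟩ := hc
  exact ⟨B, hB, h.trans hcov⟩

lemma coverNum_le {X : Set ℝ} {r : ℝ} {n : ℕ} (h : coversWith X r n) : coverNum X r ≤ n :=
  Nat.sInf_le h

lemma le_of_separated {X : Set ℝ} {r : ℝ} (hr : 0 ≤ r) {k n : ℕ} (f : Fin k → ℝ)
    (hf : ∀ i, f i ∈ X) (hsep : ∀ i j, i ≠ j → r < dist (f i) (f j))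
    (hc : coversWith X r n) : k ≤ n := by
  obtain ⟨B, hB, hcov⟩ := hc
  have hg : ∀ i : Fin k, ∃ j : Fin n, f i ∈ B j := by
    intro i
    have := hcov (hf i)
    simpa using this
  choose g hgmem using hg
  have hginj : Function.Injective g := by
    intro i j hij
    by_contra hne
    have h1 := hgmem i
    have h2 := hgmem j
    rw [hij] at h1
    have : edist (f i) (f j) ≤ EMetric.diam (B (g j)) := EMetric.edist_le_diam_of_mem h1 h2
    have : edist (f i) (f j) ≤ ENNReal.ofReal r := this.trans (hB _)
    rw [edist_le_ofReal hr] at this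
    exact absurd this (not_le.mpr (hsep i j hne))
  simpa using Fintype.card_le_of_injective g hginj

lemma separated_le_coverNum {X : Set ℝ} {r : ℝ} (hr : 0 ≤ r) {k : ℕ} (f : Fin k → ℝ)
    (hf : ∀ i, f i ∈ X) (hsep : ∀ i j, i ≠ j → r < dist (f i) (f j))
    (hne : ∃ n, coversWith X r n) : k ≤ coverNum X r := by
  have : coverNum X r ∈ {n : ℕ | coversWith X r n} := Nat.sInf_mem hne
  exact le_of_separated hr f hf hsep this

lemma coversWith_union {X Y : Set ℝ} {r : ℝ} {n m : ℕ}
    (hX : coversWith X r n) (hY : coversWith Y r m) : coversWith (X ∪ Y) r (n + m) := by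
  obtain ⟨B, hB, hBcov⟩ := hX
  obtain ⟨D, hD, hDcov⟩ := hY
  refine ⟨fun i => Fin.addCases B D i, fun i => ?_, fun x hx => ?_⟩
  · refine Fin.addCases (fun i => ?_) (fun i => ?_) i <;> simp [hB, hD]
  · rcases hx with hx | hx
    · obtain ⟨i, hi⟩ := Set.mem_iUnion.mp (hBcov hx)
      exact Set.mem_iUnion.mpr ⟨Fin.castAdd m i, by simpa using hi⟩
    · obtain ⟨i, hi⟩ := Set.mem_iUnion.mp (hDcov hx)
      exact Set.mem_iUnion.mpr ⟨Fin.natAdd n i, by simpa using hi⟩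

/-- Cover an interval `[a,b]` with `K ≥ 1` intervals of length `r`. -/
lemma coversWith_Icc {r : ℝ} (hr : 0 < r) (a b : ℝ) (K : ℕ) (hK : 1 ≤ K)
    (hb : b ≤ a + K * r) : coversWith (Set.Icc a b) r K := by
  refine ⟨fun j => Set.Icc (a + j * r) (a + j * r + r), fun j => ?_, fun y hy => ?_⟩
  · beta_reduce
    unfold EMetric.diam
    rw [Real.ediam_Icc]
    simp
  · obtain ⟨hy1, hy2⟩ := hy
    set j0 : ℕ := min (Nat.floor ((y - a) / r)) (K - 1) with hj0
    have hj0lt : j0 < K := lt_of_le_of_lt (min_le_right _ _) (by omega)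
    refine Set.mem_iUnion.mpr ⟨⟨j0, hj0lt⟩, ?_⟩
    have hya : 0 ≤ (y - a) / r := div_nonneg (by linarith) hr.le
    constructor
    · have h1 : (j0 : ℝ) ≤ (y - a) / r :=
        le_trans (by exact_mod_cast Nat.cast_le.mpr (min_le_left _ _)) (Nat.floor_le hya)
      have := (le_div_iff₀ hr).mp h1
      simp only []
      linarith
    · rcases le_or_gt (Nat.floor ((y - a) / r)) (K - 1) with h | h
      · have hj0eq : j0 = Nat.floor ((y - a) / r) := min_eq_left h
        have h2 : (y - a) / r < j0 + 1 := by
          rw [hj0eq]; exact Nat.lt_floor_add_one _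
        have := (div_lt_iff₀ hr).mp h2
        simp only []
        linarith
      · have hj0eq : j0 = K - 1 := min_eq_right h.le
        have : ((j0 : ℝ) + 1) = K := by
          rw [hj0eq]
          push_cast [Nat.cast_sub hK]
          ring
        have hKr : a + j0 * r + r = a + K * r := by
          rw [← this]; ring
        simp only []
        linarith

end Helpers
section Helpers2
open Real Filter

/-- Singletons cover. -/
lemma coversWith_singletons {r : ℝ} (hr : 0 ≤ r) (N : ℕ) (g : Fin N → ℝ) :
    coversWith (⋃ i, {g i}) r N := by
  refine ⟨fun i => {g i}, fun i => by simp [EMetric.diam, Metric.ediam_singleton], le_refl _⟩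

/-- Global cover of `recipSet` at scale `r` by `⌈r^{-1/2}⌉ + ⌈r^{-1/2}⌉` sets. -/
lemma coversWith_recipSet {r : ℝ} (hr0 : 0 < r) (hr1 : r < 1) :
    coversWith recipSet r (Nat.ceil (r ^ (-(1/2) : ℝ)) + Nat.ceil (r ^ (-(1/2) : ℝ))) := by
  set N : ℕ := Nat.ceil (r ^ (-(1/2) : ℝ)) with hN
  have hrhalf : (0:ℝ) < r ^ (-(1/2) : ℝ) := Real.rpow_pos_of_pos hr0 _
  have hN1 : 1 ≤ N := Nat.one_le_ceil_iff.mpr hrhalf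
  have hNge : r ^ (-(1/2) : ℝ) ≤ (N : ℝ) := Nat.le_ceil _
  have hposhalf : (0:ℝ) < r ^ ((1/2) : ℝ) := Real.rpow_pos_of_pos hr0 _
  have hinv : r ^ ((1/2) : ℝ) * r ^ (-(1/2) : ℝ) = 1 := by
    rw [← Real.rpow_add hr0]; norm_num
  have hsub : recipSet ⊆ (⋃ i : Fin N, {(1 : ℝ) / ((i : ℕ) + 1)}) ∪
      Set.Icc 0 (r ^ ((1/2) : ℝ)) := by
    rintro x ⟨n, hn1, rfl⟩
    rcases le_or_gt n N with h | h
    · left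
      refine Set.mem_iUnion.mpr ⟨⟨n - 1, by omega⟩, ?_⟩
      simp only [Set.mem_singleton_iff]
      congr 1
      push_cast [Nat.cast_sub hn1]
      ring
    · right
      have hnpos : (0:ℝ) < n := by positivity
      constructor
      · positivity
      · have h1 : r ^ (-(1/2) : ℝ) < (n : ℝ) := lt_of_le_of_lt hNge (by exact_mod_cast h)
        rw [div_le_iff₀ hnpos]
        calc (1:ℝ) = r ^ ((1/2) : ℝ) * r ^ (-(1/2) : ℝ) := hinv.symm
        _ ≤ r ^ ((1/2) : ℝ) * n := by nlinarith
  refine coversWith_mono hsub (coversWith_union (coversWith_singletons hr0.le N _) ?_)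
  refine coversWith_Icc hr0 0 _ N hN1 ?_
  have hkey : r ^ (-(1/2) : ℝ) * r = r ^ ((1/2) : ℝ) := by
    rw [← Real.rpow_add_one hr0.ne']
    norm_num
  nlinarith [hkey, hNge, hr0]

/-- Any subset of a closed ball can be covered by `⌈2R/r⌉` intervals of length r. -/
lemma coversWith_ball {r R x : ℝ} (hr : 0 < r) (hR : 0 < R) (X : Set ℝ)
    (hX : X ⊆ Metric.closedBall x R) : coversWith X r (Nat.ceil (2 * R / r)) := by
  have h1 : 1 ≤ Nat.ceil (2 * R / r) := Nat.one_le_ceil_iff.mpr (by positivity)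
  refine coversWith_mono ?_ (coversWith_Icc hr (x - R) (x + R) _ h1 ?_)
  · intro y hy
    have := hX hy
    rw [Metric.mem_closedBall, Real.dist_eq, abs_le] at this
    exact ⟨by linarith [this.1], by linarith [this.2]⟩
  · have := Nat.le_ceil (2 * R / r)
    have h2 : 2 * R / r * r = 2 * R := div_mul_cancel₀ _ hr.ne'
    nlinarith [Nat.le_ceil (2 * R / r)]
end Helpers2
section Upper
open Real Filter

lemma rpow_theta_div (r θ : ℝ) (hr0 : 0 < r) : r ^ θ / r = r ^ (θ - 1) := by
  rw [Real.rpow_sub hr0, Real.rpow_one]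

lemma one_le_rpow_theta_sub_one {r θ : ℝ} (hr0 : 0 < r) (hr1 : r < 1) (hθ : θ ≤ 1) :
    1 ≤ r ^ (θ - 1) :=
  Real.one_le_rpow_of_pos_of_le_one_of_nonpos hr0 hr1.le (by linarith)

lemma upper_bound (θ : ℝ) (hθ : θ ∈ Set.Ioo (0:ℝ) 1) :
    min ((1/2) / (1 - θ)) 1 ∈ {s : ℝ | 0 ≤ s ∧ ∃ C > (0:ℝ), ∀ r ∈ Set.Ioo (0:ℝ) 1, ∀ x : ℝ,
      (coverNum (recipSet ∩ Metric.closedBall x (r ^ θ)) r : ℝ) ≤ C * (r ^ θ / r) ^ s} := by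
  obtain ⟨hθ0, hθ1⟩ := hθ
  have h1θ : (0:ℝ) < 1 - θ := by linarith
  set m : ℝ := min ((1/2) / (1 - θ)) 1 with hm
  have hm0 : 0 ≤ m := le_min (by positivity) one_pos.le
  refine ⟨hm0, 4, by norm_num, fun r hr x => ?_⟩
  obtain ⟨hr0, hr1⟩ := hr
  have hdiv : r ^ θ / r = r ^ (θ - 1) := rpow_theta_div r θ hr0
  have hbase : (1:ℝ) ≤ r ^ (θ - 1) := one_le_rpow_theta_sub_one hr0 hr1 hθ1.le
  rcases le_or_gt θ (1/2) with hhalf | hhalf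
  · -- m = (1/2)/(1-θ), use global cover
    have hmeq : m = (1/2) / (1 - θ) := min_eq_left (by
      rw [div_le_one h1θ]; linarith)
    have hexp : (θ - 1) * m = -(1/2) := by
      rw [hmeq]; field_simp; ring
    have hrm : (r ^ θ / r) ^ m = r ^ (-(1/2) : ℝ) := by
      rw [hdiv, ← Real.rpow_mul hr0.le, hexp]
    set N : ℕ := Nat.ceil (r ^ (-(1/2) : ℝ)) with hN
    have hcov := coversWith_recipSet hr0 hr1
    have hcov2 : coversWith (recipSet ∩ Metric.closedBall x (r ^ θ)) r (N + N) :=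
      coversWith_mono Set.inter_subset_left hcov
    have hle : coverNum (recipSet ∩ Metric.closedBall x (r ^ θ)) r ≤ N + N :=
      coverNum_le hcov2
    have hrhalf : (0:ℝ) < r ^ (-(1/2) : ℝ) := Real.rpow_pos_of_pos hr0 _
    have h1le : (1:ℝ) ≤ r ^ (-(1/2) : ℝ) :=
      Real.one_le_rpow_of_pos_of_le_one_of_nonpos hr0 hr1.le (by norm_num)
    have hNle : (N : ℝ) ≤ r ^ (-(1/2) : ℝ) + 1 := le_of_lt (Nat.ceil_lt_add_one hrhalf.le)
    calc (coverNum (recipSet ∩ Metric.closedBall x (r ^ θ)) r : ℝ)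
        ≤ (N : ℝ) + N := by exact_mod_cast hle
      _ ≤ 2 * (r ^ (-(1/2) : ℝ) + 1) := by linarith
      _ ≤ 4 * r ^ (-(1/2) : ℝ) := by linarith
      _ = 4 * (r ^ θ / r) ^ m := by rw [hrm]
  · -- m = 1, cover the ball
    have hmeq : m = 1 := min_eq_right (by
      rw [le_div_iff₀ h1θ]; linarith)
    have hRpos : (0:ℝ) < r ^ θ := Real.rpow_pos_of_pos hr0 _
    have hcov : coversWith (recipSet ∩ Metric.closedBall x (r ^ θ)) r
        (Nat.ceil (2 * r ^ θ / r)) :=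
      coversWith_ball hr0 hRpos _ Set.inter_subset_right
    have hle := coverNum_le hcov
    have hq : (0:ℝ) < 2 * r ^ θ / r := by positivity
    have hNle : (Nat.ceil (2 * r ^ θ / r) : ℝ) ≤ 2 * r ^ θ / r + 1 :=
      le_of_lt (Nat.ceil_lt_add_one hq.le)
    have h2 : 2 * r ^ θ / r = 2 * (r ^ θ / r) := by ring
    calc (coverNum (recipSet ∩ Metric.closedBall x (r ^ θ)) r : ℝ)
        ≤ (Nat.ceil (2 * r ^ θ / r) : ℝ) := by exact_mod_cast hle
      _ ≤ 2 * (r ^ θ / r) + 1 := by rw [← h2]; linarith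
      _ ≤ 4 * (r ^ θ / r) := by rw [hdiv]; linarith
      _ = 4 * (r ^ θ / r) ^ m := by rw [hmeq, Real.rpow_one]
end Upper
section Lower
open Real Filter

lemma recip_mem {n : ℕ} (hn : 1 ≤ n) : (1:ℝ) / n ∈ recipSet := ⟨n, hn, rfl⟩

/-- Lower bound on covering number via separated reciprocals, case θ < 1/2. -/
lemma lower_one {r θ : ℝ} (hr0 : 0 < r) (hr1 : r < 1) (hθ0 : 0 < θ) :
    r ^ (-(1/2):ℝ) - r ^ (-θ) - 1 ≤
      (coverNum (recipSet ∩ Metric.closedBall 0 (r ^ θ)) r : ℝ) := by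
  set n0 : ℕ := Nat.ceil (r ^ (-θ)) with hn0
  set n1 : ℕ := Nat.floor (r ^ (-(1/2):ℝ)) with hn1
  set k : ℕ := n1 + 1 - n0 with hk
  have hrt : (0:ℝ) < r ^ (-θ) := Real.rpow_pos_of_pos hr0 _
  have hrh : (0:ℝ) < r ^ (-(1/2):ℝ) := Real.rpow_pos_of_pos hr0 _
  have h1rt : (1:ℝ) ≤ r ^ (-θ) :=
    Real.one_le_rpow_of_pos_of_le_one_of_nonpos hr0 hr1.le (by linarith)
  have hn0ge : 1 ≤ n0 := Nat.one_le_ceil_iff.mpr hrt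
  have hn0le : (n0 : ℝ) < r ^ (-θ) + 1 := Nat.ceil_lt_add_one hrt.le
  have hn0geR : r ^ (-θ) ≤ (n0 : ℝ) := Nat.le_ceil _
  have hn1le : (n1 : ℝ) ≤ r ^ (-(1/2):ℝ) := Nat.floor_le hrh.le
  have hn1ge : r ^ (-(1/2):ℝ) - 1 < (n1 : ℝ) := Nat.sub_one_lt_floor _
  have hRinv : r ^ (-θ) * r ^ θ = 1 := by
    rw [← Real.rpow_add hr0]; simp
  have hhalfsq : r ^ (-(1/2):ℝ) * r ^ (-(1/2):ℝ) = r⁻¹ := by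
    rw [← Real.rpow_add hr0]
    norm_num
    exact Real.rpow_neg_one r
  have hRpos : (0:ℝ) < r ^ θ := Real.rpow_pos_of_pos hr0 _
  -- the separated family
  have hsep_aux : ∀ a b : ℕ, n0 ≤ a → a < b → b ≤ n1 → r < 1/(a:ℝ) - 1/(b:ℝ) := by
    intro a b ha hab hb
    have ha1 : 1 ≤ a := le_trans hn0ge ha
    have haR : (0:ℝ) < a := by exact_mod_cast ha1
    have hbR : (0:ℝ) < b := by exact_mod_cast (by omega : 0 < b)
    have habR : (a:ℝ) + 1 ≤ b := by exact_mod_cast hab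
    have haleR : (a:ℝ) ≤ (n1:ℝ) - 1 := by
      have : a ≤ n1 - 1 := by omega
      have h1 : 1 ≤ n1 := by omega
      calc (a:ℝ) ≤ ((n1 - 1 : ℕ) : ℝ) := by exact_mod_cast this
        _ = (n1:ℝ) - 1 := by push_cast [Nat.cast_sub h1]; ring
    have hbleR : (b:ℝ) ≤ (n1:ℝ) := by exact_mod_cast hb
    have hprod : (a:ℝ) * b < r⁻¹ := by
      calc (a:ℝ) * b ≤ (r ^ (-(1/2):ℝ) - 1) * r ^ (-(1/2):ℝ) := by nlinarith
        _ < r⁻¹ := by rw [← hhalfsq]; nlinarith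
    have h1 : r * ((a:ℝ) * b) < 1 := by
      calc r * ((a:ℝ)*b) < r * r⁻¹ := mul_lt_mul_of_pos_left hprod hr0
        _ = 1 := mul_inv_cancel₀ hr0.ne'
    rw [div_sub_div _ _ haR.ne' hbR.ne', lt_div_iff₀ (by positivity)]
    nlinarith
  have key : ∀ a b : ℕ, n0 ≤ a → a < b → b ≤ n1 →
      r < dist ((1:ℝ)/(a:ℝ)) ((1:ℝ)/(b:ℝ)) := by
    intro a b ha hab hb
    have h5 := hsep_aux a b ha hab hb
    calc r < 1/(a:ℝ) - 1/(b:ℝ) := h5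
      _ ≤ |1/(a:ℝ) - 1/(b:ℝ)| := le_abs_self _
      _ = dist ((1:ℝ)/(a:ℝ)) ((1:ℝ)/(b:ℝ)) := (Real.dist_eq _ _).symm
  have hsep : ∀ i j : Fin k, i ≠ j →
      r < dist ((1:ℝ)/((n0 + (i:ℕ) : ℕ):ℝ)) ((1:ℝ)/((n0 + (j:ℕ) : ℕ):ℝ)) := by
    intro i j hij
    have hi : n0 + (i:ℕ) ≤ n1 := by have := i.isLt; omega
    have hj : n0 + (j:ℕ) ≤ n1 := by have := j.isLt; omega
    have hne' : (i:ℕ) ≠ (j:ℕ) := fun hh => hij (Fin.ext hh)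
    rcases hne'.lt_or_gt with h | h
    · exact key (n0 + i) (n0 + j) (by omega) (by omega) hj
    · rw [dist_comm]
      exact key (n0 + j) (n0 + i) (by omega) (by omega) hi
  have hmem : ∀ i : Fin k, (1:ℝ)/((n0 + (i:ℕ) : ℕ):ℝ) ∈
      recipSet ∩ Metric.closedBall 0 (r ^ θ) := by
    intro i
    have hi1 : 1 ≤ n0 + (i:ℕ) := by omega
    have hiR : (0:ℝ) < ((n0 + (i:ℕ) : ℕ):ℝ) := by exact_mod_cast hi1
    refine ⟨recip_mem hi1, ?_⟩
    rw [Metric.mem_closedBall, Real.dist_eq, sub_zero, abs_of_nonneg (by positivity)]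
    have hn0' : r ^ (-θ) ≤ ((n0 + (i:ℕ) : ℕ):ℝ) := by
      push_cast; linarith [hn0geR, (i:ℕ).cast_nonneg (α := ℝ)]
    rw [div_le_iff₀ hiR]
    calc (1:ℝ) = r ^ θ * r ^ (-θ) := by rw [mul_comm, hRinv]
      _ ≤ r ^ θ * ((n0 + (i:ℕ) : ℕ):ℝ) := by nlinarith
  have hne : ∃ n, coversWith (recipSet ∩ Metric.closedBall 0 (r ^ θ)) r n :=
    ⟨_, coversWith_mono Set.inter_subset_left (coversWith_recipSet hr0 hr1)⟩
  have hkle : k ≤ coverNum (recipSet ∩ Metric.closedBall 0 (r ^ θ)) r :=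
    separated_le_coverNum hr0.le _ hmem hsep hne
  have hkR : r ^ (-(1/2):ℝ) - r ^ (-θ) - 1 ≤ (k:ℝ) := by
    rcases le_or_gt n0 (n1 + 1) with h | h
    · have : (k:ℝ) = (n1:ℝ) + 1 - n0 := by
        rw [hk]; push_cast [Nat.cast_sub h]; ring
      rw [this]; linarith
    · have hk0 : k = 0 := by omega
      have : (n1:ℝ) + 1 < n0 := by exact_mod_cast h
      rw [hk0]; push_cast; linarith
  calc r ^ (-(1/2):ℝ) - r ^ (-θ) - 1 ≤ (k:ℝ) := hkR
    _ ≤ _ := by exact_mod_cast hkle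
end Lower
section Lower2
open Real Filter

set_option maxHeartbeats 1000000 in
lemma lower_two {r θ : ℝ} (hr0 : 0 < r) (hr1 : r < 1) (hθ0 : 0 < θ) (hθ1 : θ < 1)
    (h2θ : 1 ≤ 2 * θ) :
    r ^ (θ - 1) / 3 - 1 ≤ (coverNum (recipSet ∩ Metric.closedBall 0 (r ^ θ)) r : ℝ) := by
  set R : ℝ := r ^ θ with hR
  have hRpos : 0 < R := Real.rpow_pos_of_pos hr0 _
  have hRle1 : R ≤ 1 := Real.rpow_le_one hr0.le hr1.le hθ0.le
  have hR2 : R * R ≤ r := by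
    have : R * R = r ^ (2 * θ) := by
      rw [hR, ← Real.rpow_add hr0]; ring_nf
    rw [this]
    calc r ^ (2 * θ) ≤ r ^ (1:ℝ) := Real.rpow_le_rpow_of_exponent_ge hr0 hr1.le h2θ
      _ = r := Real.rpow_one r
  set K : ℕ := Nat.floor (R / (3 * r)) with hK
  have hKle : (K:ℝ) ≤ R / (3 * r) := Nat.floor_le (by positivity)
  have hKge : R / (3 * r) - 1 < (K:ℝ) := Nat.sub_one_lt_floor _
  -- properties of each point
  have hprop : ∀ j : Fin K,
      (0 < R - 3 * j * r) ∧ (R - 3 * j * r ≤ R) ∧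
      (1 ≤ Nat.ceil (1 / (R - 3 * j * r))) ∧
      ((1:ℝ) / (Nat.ceil (1 / (R - 3 * j * r)) : ℝ) ≤ R - 3 * j * r) ∧
      (R - 3 * j * r - r < (1:ℝ) / (Nat.ceil (1 / (R - 3 * j * r)) : ℝ)) := by
    intro j
    have hjK : ((j:ℕ):ℝ) + 1 ≤ (K:ℝ) := by exact_mod_cast j.isLt
    have ht3 : 3 * r ≤ R - 3 * j * r := by
      have h1 : ((j:ℕ):ℝ) + 1 ≤ R / (3 * r) := le_trans hjK hKle
      have h2 := (le_div_iff₀ (by positivity : (0:ℝ) < 3 * r)).mp h1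
      nlinarith
    set t : ℝ := R - 3 * j * r with htdef
    have htpos : 0 < t := lt_of_lt_of_le (by positivity) ht3
    have htR : t ≤ R := by
      have : (0:ℝ) ≤ 3 * j * r := by positivity
      simp only [htdef]; linarith
    have ht1 : t ≤ 1 := le_trans htR hRle1
    have hinv1 : 1 ≤ 1 / t := (le_div_iff₀ htpos).mpr (by linarith)
    have hceil1 : 1 ≤ Nat.ceil (1 / t) := Nat.one_le_ceil_iff.mpr (by positivity)
    set n : ℕ := Nat.ceil (1 / t) with hn
    have hnR : (0:ℝ) < (n:ℝ) := by exact_mod_cast hceil1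
    have hnge : 1 / t ≤ (n:ℝ) := Nat.le_ceil _
    have hnlt : (n:ℝ) < 1 / t + 1 := Nat.ceil_lt_add_one (by positivity)
    have hup : (1:ℝ) / (n:ℝ) ≤ t := by
      rw [div_le_iff₀ hnR]
      calc (1:ℝ) = t * (1 / t) := by field_simp
        _ ≤ t * n := by nlinarith
    have ht2 : t * t ≤ r := le_trans (by nlinarith) hR2
    have hlow : t - r < (1:ℝ) / (n:ℝ) := by
      clear_value t n
      rcases le_or_gt (t - r) 0 with h | h
      · exact lt_of_le_of_lt h (by positivity)
      · rw [lt_div_iff₀ hnR]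
        have e1 : (t - r) * n ≤ (t - t * t) * n := by nlinarith
        have e2 : (t - t * t) * n ≤ (t - t * t) * (1 / t + 1) :=
          mul_le_mul_of_nonneg_left hnlt.le (by nlinarith)
        have e3 : (t - t * t) * (1 / t + 1) = 1 - t * t := by field_simp; ring
        linarith [mul_pos htpos htpos]
    exact ⟨htpos, htR, hceil1, hup, hlow⟩
  -- separated family
  set f : Fin K → ℝ := fun j => (1:ℝ) / (Nat.ceil (1 / (R - 3 * j * r)) : ℝ) with hf
  have hmem : ∀ j : Fin K, f j ∈ recipSet ∩ Metric.closedBall 0 R := by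
    intro j
    obtain ⟨h1, h2, h3, h4, h5⟩ := hprop j
    refine ⟨recip_mem h3, ?_⟩
    rw [Metric.mem_closedBall, Real.dist_eq, sub_zero]
    have hnpos : (0:ℝ) < (Nat.ceil (1 / (R - 3 * j * r)) : ℝ) := by exact_mod_cast h3
    rw [abs_of_nonneg (by positivity)]
    exact le_trans h4 h2
  have hkey : ∀ i j : Fin K, (i:ℕ) < (j:ℕ) → r < f i - f j := by
    intro i j hij
    obtain ⟨hi1, hi2, hi3, hi4, hi5⟩ := hprop i
    obtain ⟨hj1, hj2, hj3, hj4, hj5⟩ := hprop j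
    have hijR : ((i:ℕ):ℝ) + 1 ≤ ((j:ℕ):ℝ) := by exact_mod_cast hij
    have : f i > R - 3 * i * r - r := hi5
    have : f j ≤ R - 3 * j * r := hj4
    have hdiff : (R - 3 * i * r - r) - (R - 3 * j * r) ≥ 2 * r := by nlinarith
    linarith [hi5, hj4]
  have hsep : ∀ i j : Fin K, i ≠ j → r < dist (f i) (f j) := by
    intro i j hij
    have hne' : (i:ℕ) ≠ (j:ℕ) := fun hh => hij (Fin.ext hh)
    rcases hne'.lt_or_gt with h | h
    · calc r < f i - f j := hkey i j h
        _ ≤ |f i - f j| := le_abs_self _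
        _ = dist (f i) (f j) := (Real.dist_eq _ _).symm
    · rw [dist_comm]
      calc r < f j - f i := hkey j i h
        _ ≤ |f j - f i| := le_abs_self _
        _ = dist (f j) (f i) := (Real.dist_eq _ _).symm
  have hne : ∃ n, coversWith (recipSet ∩ Metric.closedBall 0 R) r n :=
    ⟨_, coversWith_mono Set.inter_subset_left (coversWith_recipSet hr0 hr1)⟩
  have hkle : K ≤ coverNum (recipSet ∩ Metric.closedBall 0 R) r :=
    separated_le_coverNum hr0.le f hmem hsep hne
  have hRr : R / (3 * r) = r ^ (θ - 1) / 3 := by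
    rw [hR, Real.rpow_sub hr0, Real.rpow_one]
    ring
  calc r ^ (θ - 1) / 3 - 1 = R / (3 * r) - 1 := by rw [hRr]
    _ ≤ (K:ℝ) := hKge.le
    _ ≤ _ := by exact_mod_cast hkle
end Lower2
section Main
open Real Filter

lemma tendsto_rpow_zero' {e : ℝ} (he : 0 < e) :
    Filter.Tendsto (fun r : ℝ => r ^ e) (nhdsWithin 0 (Set.Ioi 0)) (nhds 0) := by
  have h := (Real.continuousAt_rpow_const 0 e (Or.inr he.le)).tendsto
  rw [Real.zero_rpow he.ne'] at h
  exact h.mono_left nhdsWithin_le_nhds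

/-- If `1 ≤ C₁ r^{e₁} + C₂ r^{e₂} + C₃ r^{e₃}` for all `r ∈ (0,1)` with positive
exponents, contradiction. -/
lemma no_eventual_one {C₁ C₂ C₃ e₁ e₂ e₃ : ℝ} (he₁ : 0 < e₁) (he₂ : 0 < e₂) (he₃ : 0 < e₃)
    (h : ∀ r ∈ Set.Ioo (0:ℝ) 1, 1 ≤ C₁ * r ^ e₁ + C₂ * r ^ e₂ + C₃ * r ^ e₃) : False := by
  have htend : Filter.Tendsto (fun r : ℝ => C₁ * r ^ e₁ + C₂ * r ^ e₂ + C₃ * r ^ e₃)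
      (nhdsWithin 0 (Set.Ioi 0)) (nhds 0) := by
    have := (((tendsto_rpow_zero' he₁).const_mul C₁).add
      ((tendsto_rpow_zero' he₂).const_mul C₂)).add ((tendsto_rpow_zero' he₃).const_mul C₃)
    simpa using this
  have hev : ∀ᶠ r in nhdsWithin 0 (Set.Ioi 0),
      C₁ * r ^ e₁ + C₂ * r ^ e₂ + C₃ * r ^ e₃ < 1 :=
    htend.eventually_lt_const one_pos
  have hmem : Set.Ioo (0:ℝ) 1 ∈ nhdsWithin 0 (Set.Ioi 0) :=
    Ioo_mem_nhdsGT_of_mem ⟨le_refl 0, one_pos⟩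
  obtain ⟨r, hr1, hr2⟩ := (hev.and (Filter.eventually_of_mem hmem (fun x hx => hx))).exists
  exact absurd (h r hr2) (not_le.mpr hr1)

theorem stmt12' (θ : ℝ) (hθ : θ ∈ Set.Ioo (0:ℝ) 1) :
    assouadSpec θ recipSet = min ((1/2) / (1 - θ)) 1 := by
  obtain ⟨hθ0, hθ1⟩ := hθ
  have h1θ : (0:ℝ) < 1 - θ := by linarith
  set m : ℝ := min ((1/2) / (1 - θ)) 1 with hm
  have hmem := upper_bound θ ⟨hθ0, hθ1⟩
  rw [assouadSpec]
  refine le_antisymm (csInf_le ⟨0, fun s hs => hs.1⟩ hmem) (le_csInf ⟨m, hmem⟩ ?_)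
  rintro s ⟨hs0, C, hC, hb⟩
  -- rewrite the bound in exponential form
  have hb' : ∀ r ∈ Set.Ioo (0:ℝ) 1,
      (coverNum (recipSet ∩ Metric.closedBall 0 (r ^ θ)) r : ℝ) ≤ C * r ^ ((θ - 1) * s) := by
    intro r hr
    have := hb r hr 0
    rwa [rpow_theta_div r θ hr.1, ← Real.rpow_mul hr.1.le] at this
  rcases lt_or_ge θ (1/2) with hhalf | hhalf
  · -- show (1/2)/(1-θ) ≤ s
    have key : (1/2) / (1 - θ) ≤ s := by
      by_contra hcon
      push_neg at hcon
      have hes : (1 - θ) * s < 1/2 := by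
        have h' := (lt_div_iff₀ h1θ).mp hcon
        nlinarith
      obtain ⟨e, he⟩ : ∃ e : ℝ, e = 1/2 - (1 - θ) * s := ⟨_, rfl⟩
      have hepos : 0 < e := by rw [he]; linarith
      refine no_eventual_one (C₁ := C) (C₂ := 1) (C₃ := 1)
        (e₁ := e) (e₂ := 1/2 - θ) (e₃ := 1/2) hepos (by linarith) (by norm_num) ?_
      intro r hr
      obtain ⟨hr0, hr1⟩ := hr
      have hlow := lower_one hr0 hr1 hθ0
      have hup := hb' r ⟨hr0, hr1⟩
      have hh : r ^ (-(1/2):ℝ) - r ^ (-θ) - 1 ≤ C * r ^ ((θ - 1) * s) :=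
        le_trans hlow hup
      have hhp : (0:ℝ) < r ^ ((1/2):ℝ) := Real.rpow_pos_of_pos hr0 _
      have hmul := mul_le_mul_of_nonneg_left hh hhp.le
      have id1 : r ^ ((1/2):ℝ) * r ^ (-(1/2):ℝ) = 1 := by
        rw [← Real.rpow_add hr0]; norm_num
      have id2 : r ^ ((1/2):ℝ) * r ^ (-θ) = r ^ (1/2 - θ) := by
        rw [← Real.rpow_add hr0]; ring_nf
      have id3 : r ^ ((1/2):ℝ) * r ^ ((θ - 1) * s) = r ^ e := by
        rw [← Real.rpow_add hr0]
        congr 1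
        rw [he]; ring
      rw [mul_sub, mul_sub, id1, id2, mul_one] at hmul
      have id4 : r ^ ((1/2):ℝ) * (C * r ^ ((θ - 1) * s)) = C * r ^ e := by
        rw [← id3]; ring
      rw [id4] at hmul
      linarith
    calc m ≤ (1/2) / (1 - θ) := min_le_left _ _
      _ ≤ s := key
  · -- show 1 ≤ s
    have key : (1:ℝ) ≤ s := by
      by_contra hcon
      push_neg at hcon
      obtain ⟨e, he⟩ : ∃ e : ℝ, e = (1 - θ) * (1 - s) := ⟨_, rfl⟩
      have hepos : 0 < e := by rw [he]; exact mul_pos h1θ (by linarith)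
      refine no_eventual_one (C₁ := 3 * C) (C₂ := 3) (C₃ := 1)
        (e₁ := e) (e₂ := 1 - θ) (e₃ := 1/2) hepos h1θ (by norm_num) ?_
      intro r hr
      obtain ⟨hr0, hr1⟩ := hr
      have hlow := lower_two hr0 hr1 hθ0 hθ1 (by linarith : 1 ≤ 2 * θ)
      have hup := hb' r ⟨hr0, hr1⟩
      have hh : r ^ (θ - 1) / 3 - 1 ≤ C * r ^ ((θ - 1) * s) := le_trans hlow hup
      have hhp : (0:ℝ) < r ^ (1 - θ) := Real.rpow_pos_of_pos hr0 _
      have hmul := mul_le_mul_of_nonneg_left hh (by positivity : (0:ℝ) ≤ 3 * r ^ (1 - θ))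
      have id1 : r ^ (1 - θ) * r ^ (θ - 1) = 1 := by
        rw [← Real.rpow_add hr0]; norm_num
      have id3 : r ^ (1 - θ) * r ^ ((θ - 1) * s) = r ^ e := by
        rw [← Real.rpow_add hr0]
        congr 1
        rw [he]; ring
      have lhs_eq : 3 * r ^ (1 - θ) * (r ^ (θ - 1) / 3 - 1) = 1 - 3 * r ^ (1 - θ) := by
        field_simp [id1]
        nlinarith [id1]
      have rhs_eq : 3 * r ^ (1 - θ) * (C * r ^ ((θ - 1) * s)) = 3 * C * r ^ e := by
        rw [← id3]; ring
      rw [lhs_eq, rhs_eq] at hmul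
      have hr1' : (0:ℝ) < r ^ ((1:ℝ)/2) := Real.rpow_pos_of_pos hr0 _
      linarith
    calc m ≤ 1 := min_le_right _ _
      _ ≤ s := key
end Main
theorem stmt12 (θ : ℝ) (hθ : θ ∈ Ioo (0:ℝ) 1) :
    assouadSpec θ recipSet = min ((1/2) / (1 - θ)) 1 := stmt12' θ hθ
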